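/- Conversely, if χ : (r_1, r_2) → ℂ is differentiable, avoids the zeros and critical points of B, satisfies χ'(r) = B(χ(r))/(r·B'(χ(r))) and B(χ(r_0)) = r_0·e^{it_0} for some r_0 ∈ (r_1, r_2) with r_0 > 0, then B(χ(r)) = r·e^{it_0} for all r ∈ (r_1, r_2). -/

import Mathlib

/-- Conversely, a solution `χ` of the ODE `χ'(r) = B(χ(r))/(r B'(χ(r)))` on
`(r₁, r₂) ⊂ (0, ∞)` with initial condition `B(χ(r₀)) = r₀ e^{i t₀}` satisfies
`B(χ(r)) = r e^{i t₀}` for all `r ∈ (r₁, r₂)`. -/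
theorem ode_to_implicit (n : ℕ) (a : Fin n → ℂ) (ha : ∀ k, ‖a k‖ < 1)
    (ε : ℂ) (hε : ‖ε‖ = 1) (B : ℂ → ℂ)
    (hB : B = fun z => ε * ∏ k, (z - a k) / (1 - (starRingEnd ℂ) (a k) * z))
    (r₁ r₂ r₀ t₀ : ℝ) (hr₁ : 0 ≤ r₁) (hr₀ : r₀ ∈ Set.Ioo r₁ r₂) (hr₀pos : 0 < r₀)
    (χ : ℝ → ℂ)
    (hden : ∀ r ∈ Set.Ioo r₁ r₂, ∀ k, 1 - (starRingEnd ℂ) (a k) * χ r ≠ 0)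
    (hne : ∀ r ∈ Set.Ioo r₁ r₂, B (χ r) ≠ 0)
    (hcrit : ∀ r ∈ Set.Ioo r₁ r₂, deriv B (χ r) ≠ 0)
    (hode : ∀ r ∈ Set.Ioo r₁ r₂,
      HasDerivAt χ (B (χ r) / ((r : ℂ) * deriv B (χ r))) r)
    (hinit : B (χ r₀) = (r₀ : ℂ) * Complex.exp (Complex.I * t₀)) :
    ∀ r ∈ Set.Ioo r₁ r₂, B (χ r) = (r : ℂ) * Complex.exp (Complex.I * t₀) := by
  classical
  -- `B` is differentiable at `χ r` for `r` in the interval.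
  have hBdiff : ∀ r ∈ Set.Ioo r₁ r₂, DifferentiableAt ℂ B (χ r) := by
    intro r hr
    rw [hB]
    apply DifferentiableAt.const_mul
    have : ∀ s : Finset (Fin n),
        DifferentiableAt ℂ (fun z => ∏ k ∈ s, (z - a k) / (1 - (starRingEnd ℂ) (a k) * z))
          (χ r) := by
      intro s
      induction s using Finset.induction with
      | empty => simpa using differentiableAt_const (1 : ℂ)
      | @insert k s hk ih =>
        simp only [Finset.prod_insert hk]
        exact DifferentiableAt.mul
          (DifferentiableAt.div (differentiableAt_id.sub (differentiableAt_const _))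
            ((differentiableAt_const _).sub ((differentiableAt_const _).mul differentiableAt_id))
            (hden r hr _)) ih
    exact this Finset.univ
  -- The function `g r = B (χ r) / r` has zero derivative on the interval.
  set g : ℝ → ℂ := fun r => B (χ r) / (r : ℂ) with hg
  have hrpos : ∀ r ∈ Set.Ioo r₁ r₂, (0:ℝ) < r := fun r hr => lt_of_le_of_lt hr₁ hr.1
  have hgderiv : ∀ r ∈ Set.Ioo r₁ r₂, HasDerivAt g 0 r := by
    intro r hr
    have hrne : ((r : ℝ) : ℂ) ≠ 0 := by
      exact_mod_cast (hrpos r hr).ne'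
    have h1 : HasDerivAt (fun s : ℝ => B (χ s))
        (deriv B (χ r) * (B (χ r) / ((r : ℂ) * deriv B (χ r)))) r :=
      HasDerivAt.comp r ((hBdiff r hr).hasDerivAt) (hode r hr)
    have h2 : HasDerivAt (fun s : ℝ => ((s : ℝ) : ℂ)) 1 r := by
      simpa using (hasDerivAt_id r).ofReal_comp
    have h3 := h1.div h2 hrne
    rw [hg]
    have h0 : (deriv B (χ r) * (B (χ r) / ((r : ℂ) * deriv B (χ r))) * (r : ℂ)
        - B (χ r) * 1) / ((r : ℂ)) ^ 2 = 0 := by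
      rw [div_eq_zero_iff]
      left
      field_simp [hcrit r hr]
      ring
    rw [← h0]
    exact h3
  -- Hence `g` is constant on the convex set `Ioo r₁ r₂`.
  have hconst : ∀ r ∈ Set.Ioo r₁ r₂, g r = g r₀ := by
    intro r hr
    apply (convex_Ioo r₁ r₂).is_const_of_fderivWithin_eq_zero
      (f := g) (fun s hs => ((hgderiv s hs).differentiableAt).differentiableWithinAt)
      ?_ hr hr₀
    intro s hs
    have : fderivWithin ℝ g (Set.Ioo r₁ r₂) s = fderiv ℝ g s :=
      fderivWithin_of_isOpen isOpen_Ioo hs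
    rw [this, (hgderiv s hs).hasFDerivAt.fderiv]
    ext x
    simp
  intro r hr
  have hr0ne : ((r₀ : ℝ) : ℂ) ≠ 0 := by exact_mod_cast hr₀pos.ne'
  have hrne : ((r : ℝ) : ℂ) ≠ 0 := by exact_mod_cast (hrpos r hr).ne'
  have := hconst r hr
  rw [hg] at this
  simp only [hinit] at this
  have h4 : B (χ r) / (r : ℂ) = Complex.exp (Complex.I * t₀) := by
    rw [this]
    field_simp
  rw [div_eq_iff hrne] at h4
  rw [h4]; ring
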